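/- The functions F̃(ũ,ṽ) = ũ³ṽ³/1152 and H̃(ũ,ṽ) = −48√3/(ũ²ṽ²), defined for ũ > 0, ṽ > 0, satisfy the natural equation (F̃·F̃_{ũṽ} − F̃_ũ·F̃_ṽ)/F̃ = (ε₁ + ∫_{ṽ₀}^{ṽ} F̃(ũ,s)·H̃_ũ(ũ,s) ds)·(ε₂ + ∫_{ũ₀}^{ũ} F̃(s,ṽ)·H̃_ṽ(s,ṽ) ds) − F̃²H̃² with ε₁ = ε₂ = 1 and initial point (ũ₀, ṽ₀) = (2√2·3^{1/4}, 2√2·3^{1/4}). -/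

import Mathlib

noncomputable def pderivU (f : ℝ → ℝ → ℝ) (u v : ℝ) : ℝ := deriv (fun t => f t v) u
noncomputable def pderivV (f : ℝ → ℝ → ℝ) (u v : ℝ) : ℝ := deriv (fun t => f u t) v
noncomputable def pderivUV (f : ℝ → ℝ → ℝ) (u v : ℝ) : ℝ := pderivV (pderivU f) u v

/-- F̃(ũ,ṽ) = ũ³ṽ³/1152. -/
noncomputable def Ft (u v : ℝ) : ℝ := u^3 * v^3 / 1152

/-- H̃(ũ,ṽ) = −48√3/(ũ²ṽ²). -/
noncomputable def Ht (u v : ℝ) : ℝ := -48 * Real.sqrt 3 / (u^2 * v^2)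

/-- The initial point coordinate ũ₀ = ṽ₀ = 2√2·3^{1/4}. -/
noncomputable def c0 : ℝ := 2 * Real.sqrt 2 * (3 : ℝ)^((1 : ℝ)/4)

lemma pU_Ft (u v : ℝ) : pderivU Ft u v = 3 * u^2 * v^3 / 1152 := by
  have h := (hasDerivAt_pow 3 u).mul_const (v^3/1152)
  have h2 : HasDerivAt (fun t : ℝ => Ft t v) (3 * u^2 * v^3 / 1152) u := by
    convert h using 1
    · rfl
    · rfl
    · funext t; simp only [Ft]; ring
    · push_cast; ring
  exact h2.deriv

lemma pV_Ft (u v : ℝ) : pderivV Ft u v = 3 * u^3 * v^2 / 1152 := by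
  have h := (hasDerivAt_pow 3 v).const_mul (u^3/1152)
  have h2 : HasDerivAt (fun t : ℝ => Ft u t) (3 * u^3 * v^2 / 1152) v := by
    convert h using 1
    · rfl
    · rfl
    · funext t; simp only [Ft]; ring
    · push_cast; ring
  exact h2.deriv

lemma pV_Ht (u v : ℝ) (hu : u ≠ 0) (hv : v ≠ 0) :
    pderivV Ht u v = 96 * Real.sqrt 3 / (u^2 * v^3) := by
  have hp : HasDerivAt (fun t : ℝ => t^2) (2*v) v := by
    simpa using hasDerivAt_pow 2 v
  have h := (hp.inv (pow_ne_zero 2 hv)).const_mul (-48 * Real.sqrt 3 / u^2)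
  have h2 : HasDerivAt (fun t : ℝ => Ht u t) (96 * Real.sqrt 3 / (u^2 * v^3)) v := by
    convert h using 1
    · rfl
    · rfl
    · funext t; simp only [Ht]
      simp only [div_eq_mul_inv, mul_inv, Pi.inv_apply]
      ring
    · field_simp; ring
  exact h2.deriv

lemma pU_Ht (u v : ℝ) (hu : u ≠ 0) (hv : v ≠ 0) :
    pderivU Ht u v = 96 * Real.sqrt 3 / (u^3 * v^2) := by
  have hp : HasDerivAt (fun t : ℝ => t^2) (2*u) u := by
    simpa using hasDerivAt_pow 2 u
  have h := (hp.inv (pow_ne_zero 2 hu)).const_mul (-48 * Real.sqrt 3 / v^2)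
  have h2 : HasDerivAt (fun t : ℝ => Ht t v) (96 * Real.sqrt 3 / (u^3 * v^2)) u := by
    convert h using 1
    · rfl
    · rfl
    · funext t; simp only [Ht]
      simp only [div_eq_mul_inv, mul_inv, Pi.inv_apply]
      ring
    · field_simp; ring
  exact h2.deriv

lemma c0_sq : c0^2 = 8 * Real.sqrt 3 := by
  unfold c0
  rw [mul_pow, mul_pow, Real.sq_sqrt (by norm_num : (0:ℝ) ≤ 2)]
  rw [← Real.rpow_natCast ((3:ℝ)^((1:ℝ)/4)) 2, ← Real.rpow_mul (by norm_num)]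
  rw [show ((1:ℝ)/4 * (2:ℕ) : ℝ) = 1/2 by push_cast; norm_num, ← Real.sqrt_eq_rpow]
  norm_num

lemma pUV_Ft (u v : ℝ) : pderivUV Ft u v = 9 * u^2 * v^2 / 1152 := by
  unfold pderivUV pderivV
  have hfun : (fun t => pderivU Ft u t) = fun t : ℝ => 3 * u^2 / 1152 * t^3 := by
    funext t; rw [pU_Ft]; ring
  rw [hfun]
  have h := (hasDerivAt_pow 3 v).const_mul (3 * u^2 / 1152)
  have h2 : HasDerivAt (fun t : ℝ => 3 * u^2 / 1152 * t^3) (9 * u^2 * v^2 / 1152) v := by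
    convert h using 1; rfl; rfl; push_cast; ring
  exact h2.deriv

lemma integrand1 (u : ℝ) (hu : u ≠ 0) (s : ℝ) :
    Ft u s * pderivU Ht u s = Real.sqrt 3 / 12 * s := by
  rcases eq_or_ne s 0 with rfl | hs
  · simp [Ft]
  · rw [pU_Ht u s hu hs]; unfold Ft; field_simp; ring

lemma integrand2 (v : ℝ) (hv : v ≠ 0) (s : ℝ) :
    Ft s v * pderivV Ht s v = Real.sqrt 3 / 12 * s := by
  rcases eq_or_ne s 0 with rfl | hs
  · simp [Ft]
  · rw [pV_Ht s v hs hv]; unfold Ft; field_simp; ring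

lemma int1 (u : ℝ) (hu : u ≠ 0) (v : ℝ) :
    (∫ s in c0..v, Ft u s * pderivU Ht u s) = Real.sqrt 3 / 12 * ((v^2 - c0^2)/2) := by
  have : (∫ s in c0..v, Ft u s * pderivU Ht u s) = ∫ s in c0..v, Real.sqrt 3 / 12 * s := by
    congr 1; funext s; exact integrand1 u hu s
  rw [this, intervalIntegral.integral_const_mul, integral_id]

lemma int2 (v : ℝ) (hv : v ≠ 0) (u : ℝ) :
    (∫ s in c0..u, Ft s v * pderivV Ht s v) = Real.sqrt 3 / 12 * ((u^2 - c0^2)/2) := by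
  have : (∫ s in c0..u, Ft s v * pderivV Ht s v) = ∫ s in c0..u, Real.sqrt 3 / 12 * s := by
    congr 1; funext s; exact integrand2 v hv s
  rw [this, intervalIntegral.integral_const_mul, integral_id]

/-- F̃ and H̃ satisfy the natural equation with ε₁ = ε₂ = 1 and
    initial point (ũ₀, ṽ₀) = (2√2·3^{1/4}, 2√2·3^{1/4}). -/
theorem stmt13 (u v : ℝ) (hu : 0 < u) (hv : 0 < v) :
    (Ft u v * pderivUV Ft u v - pderivU Ft u v * pderivV Ft u v) / Ft u v =
      (1 + ∫ s in c0..v, Ft u s * pderivU Ht u s) *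
      (1 + ∫ s in c0..u, Ft s v * pderivV Ht s v) -
      (Ft u v)^2 * (Ht u v)^2 := by
  have hu0 := hu.ne'
  have hv0 := hv.ne'
  have hs3 : Real.sqrt 3 * Real.sqrt 3 = 3 := Real.mul_self_sqrt (by norm_num)
  rw [pUV_Ft, pU_Ft, pV_Ft, int1 u hu0 v, int2 v hv0 u, c0_sq]
  unfold Ft Ht
  have hl : (u ^ 3 * v ^ 3 / 1152 * (9 * u ^ 2 * v ^ 2 / 1152) -
      3 * u ^ 2 * v ^ 3 / 1152 * (3 * u ^ 3 * v ^ 2 / 1152)) = 0 := by ring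
  rw [hl, zero_div]
  field_simp
  linear_combination (1152^2*u^4*v^4*(64*(Real.sqrt 3*Real.sqrt 3) -
    8*Real.sqrt 3*(u^2+v^2) + u^2*v^2 - 192) - 576*2304*u^6*v^6 +
    u^4*v^4*(-169869312)*(Real.sqrt 3*Real.sqrt 3 - 3) +
    21233664*(u^4*v^6+u^6*v^4)*Real.sqrt 3 + 84934656*(u^4*v^4-1)*(Real.sqrt 3*Real.sqrt 3-3) + 10616832*(u^2+v^2-u^4*v^6-u^6*v^4)*Real.sqrt 3) * hs3
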